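/- arXiv:2006.01709 — 2 statements merged into one kernel-verified Lean document; each statement's English description precedes it below -/
import Mathlib

section
/- Let T be the (j-i+1)×(j-i+1) exponential correlation matrix with coefficient ρ, 0 ≤ |ρ| < 1 (entries T_{m,n} = ρ^{n-m} for m < n, (ρ*)^{m-n} for m > n, 1 on the diagonal). Then the largest eigenvalue of T is at least B_lower = (1+|ρ|)/(1-|ρ|) − 2|ρ|(1−|ρ|^{j-i+1}) / ((j-i+1)(1−|ρ|)^2). -/
open Matrix

lemma rayleigh_le {n : Type*} [Fintype n] [DecidableEq n] [Nonempty n]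
    {A : Matrix n n ℂ} (hA : A.IsHermitian) (v : n → ℂ) :
    (star v ⬝ᵥ A *ᵥ v).re ≤ (⨆ k, hA.eigenvalues k) * ∑ k, Complex.normSq (v k) := by
  classical
  set U : Matrix n n ℂ := (hA.eigenvectorUnitary : Matrix n n ℂ) with hU
  set w : n → ℂ := star U *ᵥ v with hw
  have hstarw : star w = star v ᵥ* U := by
    rw [hw, star_mulVec]
    simp [star_eq_conjTranspose]
  have key : star v ⬝ᵥ A *ᵥ v =
      ((∑ k, hA.eigenvalues k * Complex.normSq (w k) : ℝ) : ℂ) := by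
    conv_lhs => rw [hA.spectral_theorem, Unitary.conjStarAlgAut_apply]
    rw [← mulVec_mulVec, ← mulVec_mulVec, dotProduct_mulVec, ← hstarw]
    show star w ⬝ᵥ (diagonal (RCLike.ofReal ∘ hA.eigenvalues) *ᵥ w) = _
    simp only [dotProduct, mulVec_diagonal, Function.comp, Pi.star_apply, RCLike.ofReal_alg]
    push_cast
    refine Finset.sum_congr rfl fun k _ => ?_
    simp only [Complex.real_smul, mul_one]
    rw [Complex.normSq_eq_conj_mul_self, Complex.star_def]
    ring
  have hwv : ∑ k, Complex.normSq (w k) = ∑ k, Complex.normSq (v k) := by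
    have h1 : star w ⬝ᵥ w = star v ⬝ᵥ v := by
      rw [hstarw, ← dotProduct_mulVec, hw, mulVec_mulVec,
        (Matrix.mem_unitaryGroup_iff).mp hA.eigenvectorUnitary.2, one_mulVec]
    have h2 : ∀ u : n → ℂ, star u ⬝ᵥ u = ((∑ k, Complex.normSq (u k) : ℝ) : ℂ) := by
      intro u
      simp only [dotProduct, Pi.star_apply]
      push_cast
      exact Finset.sum_congr rfl fun k _ => (Complex.normSq_eq_conj_mul_self (z := u k)).symm
    have := h1
    rw [h2, h2] at this
    exact_mod_cast this
  rw [key, Complex.ofReal_re, ← hwv, Finset.mul_sum]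
  refine Finset.sum_le_sum fun k _ => ?_
  exact mul_le_mul_of_nonneg_right (le_ciSup (Set.finite_range _).bddAbove k)
    (Complex.normSq_nonneg _)


lemma exp_sum_ident (r : ℝ) (N : ℕ) :
    (1 - r)^2 * (∑ m ∈ Finset.range N, ∑ n ∈ Finset.range N, r ^ (max m n - min m n))
      = N * (1 - r^2) - 2*r*(1 - r^N) := by
  induction N with
  | zero => simp
  | succ N ih =>
    have hrefl : ∑ m ∈ Finset.range N, r ^ (N - m) = r * ∑ d ∈ Finset.range N, r ^ d := by
      have h1 := Finset.sum_range_reflect (fun d => r ^ (d+1)) N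
      have h2 : ∀ m ∈ Finset.range N, r ^ (N - m) = r ^ ((N - 1 - m) + 1) := by
        intro m hm
        rw [Finset.mem_range] at hm
        congr 1
        omega
      rw [Finset.sum_congr rfl h2, h1, Finset.mul_sum]
      exact Finset.sum_congr rfl fun d _ => by rw [pow_succ]; ring
    have hG := geom_sum_mul r N
    have hsplit : (∑ m ∈ Finset.range (N+1), ∑ n ∈ Finset.range (N+1),
          r ^ (max m n - min m n))
        = (∑ m ∈ Finset.range N, ∑ n ∈ Finset.range N, r ^ (max m n - min m n))
          + 2 * (r * ∑ d ∈ Finset.range N, r ^ d) + 1 := by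
      rw [Finset.sum_range_succ]
      rw [Finset.sum_range_succ (fun n => r ^ (max N n - min N n))]
      have h3 : ∀ m ∈ Finset.range N,
          (∑ n ∈ Finset.range (N+1), r ^ (max m n - min m n))
          = (∑ n ∈ Finset.range N, r ^ (max m n - min m n)) + r ^ (N - m) := by
        intro m hm
        rw [Finset.mem_range] at hm
        rw [Finset.sum_range_succ]
        congr 2
        omega
      rw [Finset.sum_congr rfl h3, Finset.sum_add_distrib]
      have h4 : ∀ n ∈ Finset.range N, r ^ (max N n - min N n) = r ^ (N - n) := by
        intro n hn
        rw [Finset.mem_range] at hn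
        congr 1
        omega
      rw [Finset.sum_congr rfl h4, hrefl]
      simp only [max_self, min_self, Nat.sub_self, pow_zero]
      ring
    rw [hsplit]
    push_cast
    linear_combination ih - 2*r*(1-r) * hG

/-- Lower bound on the largest eigenvalue of the (j-i+1)×(j-i+1) exponential
correlation matrix (Proposition 1, lower bound). -/
theorem exp_corr_max_eigenvalue_lower_bound (i j : ℕ) (hij : i ≤ j)
    (ρ : ℂ) (hρ : ‖ρ‖ < 1)
    (T : Matrix (Fin (j - i + 1)) (Fin (j - i + 1)) ℂ)
    (hT : T = Matrix.of fun m n : Fin (j - i + 1) =>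
      if (m : ℕ) < (n : ℕ) then ρ ^ ((n : ℕ) - (m : ℕ))
      else if m = n then 1
      else (starRingEnd ℂ ρ) ^ ((m : ℕ) - (n : ℕ)))
    (hHerm : T.IsHermitian) :
    (1 + ‖ρ‖) / (1 - ‖ρ‖) -
        2 * ‖ρ‖ * (1 - (‖ρ‖) ^ (j - i + 1)) /
          (((j - i + 1 : ℕ) : ℝ) * (1 - ‖ρ‖) ^ 2) ≤
      ⨆ k, hHerm.eigenvalues k := by
  set r := ‖ρ‖ with hr
  have hr0 : 0 ≤ r := norm_nonneg ρ
  have h1r : (0:ℝ) < 1 - r := by linarith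
  have hNpos : (0:ℝ) < ((j - i + 1 : ℕ):ℝ) := by positivity
  rcases eq_or_ne ρ 0 with h0 | h0
  · -- ρ = 0 : bound is 1
    have hrz : r = 0 := by simp [hr, h0]
    rw [hrz]
    norm_num
    have hray := rayleigh_le hHerm (Pi.single (0 : Fin (j - i + 1)) (1:ℂ))
    have hdot : star (Pi.single (0 : Fin (j - i + 1)) (1:ℂ)) ⬝ᵥ
        T *ᵥ Pi.single (0 : Fin (j - i + 1)) (1:ℂ) = 1 := by
      rw [hT]
      simp only [dotProduct, mulVec, Pi.single_apply, Finset.mul_sum, h0, of_apply,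
        star_apply]
      rw [Finset.sum_congr rfl (fun x _ => show _ = if x = (0 : Fin (j-i+1)) then (1:ℂ) else 0
        from by rcases eq_or_ne x 0 with h | h <;> simp [h])]
      simp
    have hns : ∑ k, Complex.normSq ((Pi.single (0 : Fin (j - i + 1)) (1:ℂ) : Fin (j - i + 1) → ℂ) k) = 1 := by
      simp [Pi.single_apply, apply_ite Complex.normSq]
    rw [hdot, hns, mul_one] at hray
    simpa using hray
  · have hrpos : 0 < r := by simpa [hr] using norm_pos_iff.mpr h0
    have hrc : (r : ℂ) ≠ 0 := by exact_mod_cast hrpos.ne'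
    set v : Fin (j - i + 1) → ℂ := fun m => ((starRingEnd ℂ ρ) / (r:ℂ)) ^ (m:ℕ) with hv
    have hmulconj : ρ * starRingEnd ℂ ρ = ((r:ℂ))^2 := by
      rw [Complex.mul_conj]
      norm_cast
      rw [Complex.normSq_eq_norm_sq]
    have hns1 : ∀ m, Complex.normSq (v m) = 1 := by
      intro m
      rw [hv]
      simp only [map_pow, Complex.normSq_div]
      rw [Complex.normSq_conj, Complex.normSq_ofReal, Complex.normSq_eq_norm_sq, ← hr,
        show r * r = r ^ 2 from (sq r).symm, div_self (by positivity), one_pow]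
    have hstarv : ∀ m : Fin (j - i + 1), star (v m) = (ρ / (r:ℂ)) ^ (m:ℕ) := by
      intro m
      rw [hv]
      simp only [Complex.star_def, map_pow, map_div₀, Complex.conj_conj, Complex.conj_ofReal]
    set S : ℝ := ∑ m ∈ Finset.range (j - i + 1), ∑ n ∈ Finset.range (j - i + 1),
      r ^ (max m n - min m n) with hS
    have hentry : ∀ m n : Fin (j - i + 1), star (v m) * (T m n * v n)
        = ((r:ℂ)) ^ (max (m:ℕ) (n:ℕ) - min (m:ℕ) (n:ℕ)) := by
      intro m n
      rw [hT, hstarv]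
      simp only [of_apply]
      have hinvm : ∀ a : ℕ, ((r:ℂ))⁻¹ ^ a * ((r:ℂ)) ^ a = 1 := fun a => by
        rw [← mul_pow, inv_mul_cancel₀ hrc, one_pow]
      have hinv : ((r:ℂ))⁻¹ ^ (m:ℕ) * ((r:ℂ))⁻¹ ^ (n:ℕ) * (((r:ℂ))^(m:ℕ) * ((r:ℂ))^(n:ℕ)) = 1 := by
        linear_combination (((r:ℂ))⁻¹ ^ (n:ℕ) * ((r:ℂ)) ^ (n:ℕ)) * hinvm (m:ℕ) + hinvm (n:ℕ)
      rcases lt_trichotomy (m:ℕ) (n:ℕ) with hlt | heq | hgt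
      · rw [if_pos hlt]
        have hmax : max (m:ℕ) (n:ℕ) - min (m:ℕ) (n:ℕ) = (n:ℕ) - (m:ℕ) := by omega
        rw [hmax]
        have key : ρ^(m:ℕ) * ρ^((n:ℕ)-(m:ℕ)) * (starRingEnd ℂ ρ)^(n:ℕ)
            = ((r:ℂ))^((n:ℕ)-(m:ℕ)) * (((r:ℂ))^(m:ℕ) * ((r:ℂ))^(n:ℕ)) := by
          rw [← pow_add]
          have h1 : (m:ℕ) + ((n:ℕ)-(m:ℕ)) = (n:ℕ) := by omega
          rw [h1, ← mul_pow, hmulconj, ← pow_mul, ← pow_add, ← pow_add]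
          congr 1
          omega
        linear_combination (((r:ℂ))⁻¹ ^ (m:ℕ) * ((r:ℂ))⁻¹ ^ (n:ℕ)) * key
          + ((r:ℂ))^((n:ℕ)-(m:ℕ)) * hinv
      · have : m = n := Fin.ext heq
        subst this
        rw [if_neg (lt_irrefl _), if_pos rfl]
        simp only [Nat.sub_self, max_self, min_self, pow_zero, one_mul]
        rw [← hstarv, mul_comm, Complex.star_def, Complex.mul_conj, hns1]
        norm_num
      · rw [if_neg (by omega), if_neg (by intro h; exact absurd (congrArg Fin.val h) (by omega))]
        have hmax : max (m:ℕ) (n:ℕ) - min (m:ℕ) (n:ℕ) = (m:ℕ) - (n:ℕ) := by omega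
        rw [hmax]
        have key : ρ^(m:ℕ) * (starRingEnd ℂ ρ)^((m:ℕ)-(n:ℕ)) * (starRingEnd ℂ ρ)^(n:ℕ)
            = ((r:ℂ))^((m:ℕ)-(n:ℕ)) * (((r:ℂ))^(m:ℕ) * ((r:ℂ))^(n:ℕ)) := by
          rw [mul_assoc, ← pow_add]
          have h1 : ((m:ℕ)-(n:ℕ)) + (n:ℕ) = (m:ℕ) := by omega
          rw [h1, ← mul_pow, hmulconj, ← pow_mul, ← pow_add, ← pow_add]
          congr 1
          omega
        linear_combination (((r:ℂ))⁻¹ ^ (m:ℕ) * ((r:ℂ))⁻¹ ^ (n:ℕ)) * key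
          + ((r:ℂ))^((m:ℕ)-(n:ℕ)) * hinv
    have hdot : star v ⬝ᵥ T *ᵥ v = ((S:ℝ):ℂ) := by
      have h1 : star v ⬝ᵥ T *ᵥ v
          = ∑ m : Fin (j - i + 1), ∑ n : Fin (j - i + 1), star (v m) * (T m n * v n) := by
        simp [dotProduct, mulVec, Finset.mul_sum]
      rw [h1, Finset.sum_congr rfl fun m _ => Finset.sum_congr rfl fun n _ => hentry m n]
      have h2 : (∑ m : Fin (j - i + 1), ∑ n : Fin (j - i + 1),
            ((r:ℂ)) ^ (max (m:ℕ) (n:ℕ) - min (m:ℕ) (n:ℕ)))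
          = ∑ m ∈ Finset.range (j - i + 1), ∑ n ∈ Finset.range (j - i + 1),
              ((r:ℂ)) ^ (max m n - min m n) := by
        rw [Fin.sum_univ_eq_sum_range
          (fun m => ∑ n : Fin (j - i + 1), ((r:ℂ)) ^ (max m (n:ℕ) - min m (n:ℕ)))]
        exact Finset.sum_congr rfl fun m _ =>
          Fin.sum_univ_eq_sum_range (fun n => ((r:ℂ)) ^ (max m n - min m n)) _
      rw [h2, hS]
      push_cast
      rfl
    have hray := rayleigh_le hHerm v
    rw [hdot, Complex.ofReal_re] at hray
    have hsum1 : ∑ k, Complex.normSq (v k) = ((j - i + 1 : ℕ):ℝ) := by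
      simp [hns1]
    rw [hsum1] at hray
    have hident := exp_sum_ident r (j - i + 1)
    rw [← hS] at hident
    set c : ℝ := ((j - i + 1 : ℕ):ℝ) with hc
    set t : ℝ := r ^ (j - i + 1) with ht
    have heq : (1 + r) / (1 - r) - 2 * r * (1 - t) / (c * (1 - r) ^ 2) = S / c := by
      field_simp
      linear_combination (-1) * hident
    rw [heq]
    exact (div_le_iff₀ hNpos).mpr hray
end

section
/- Let T be the n×n exponential correlation matrix with coefficient ρ, 0 ≤ |ρ| < 1, where n = j-i+1. If n is odd, the largest eigenvalue of T is at most (1+|ρ|)/(1−|ρ|) − 2|ρ|^{(n+1)/2}/(1−|ρ|); if n is even, it is at most (1+|ρ|)(1−|ρ|^{n/2})/(1−|ρ|). -/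
open Matrix Finset

private lemma pow_add_pow_le_aux (r : ℝ) (h0 : 0 ≤ r) (h1 : r ≤ 1)
    (a b c d : ℕ) (hac : a ≤ c) (hcd : c ≤ d) (hdb : d ≤ b) (hs : a + b = c + d) :
    r ^ c + r ^ d ≤ r ^ a + r ^ b := by
  obtain ⟨e, he⟩ : ∃ e, c = a + e := ⟨c - a, by omega⟩
  have hb : b = d + e := by omega
  subst he hb
  have h1' : r ^ e ≤ 1 := pow_le_one₀ h0 h1
  have h2' : r ^ d ≤ r ^ a := pow_le_pow_of_le_one h0 h1 (by omega)
  have h3' : (0:ℝ) ≤ r ^ e := pow_nonneg h0 e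
  rw [pow_add, pow_add]
  nlinarith

private lemma geom_aux (r : ℝ) (h1 : r < 1) (a : ℕ) :
    ∑ i ∈ range a, r ^ (i + 1) = (r - r ^ (a + 1)) / (1 - r) := by
  have hne : r ≠ 1 := ne_of_lt h1
  have : ∑ i ∈ range a, r ^ (i + 1) = r * ∑ i ∈ range a, r ^ i := by
    rw [Finset.mul_sum]; exact Finset.sum_congr rfl fun i _ => by ring
  rw [this, geom_sum_eq hne]
  have h2 : (1:ℝ) - r ≠ 0 := by linarith
  rw [eq_div_iff h2, mul_comm r, mul_assoc, div_mul_eq_mul_div,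
    div_eq_iff (sub_ne_zero.mpr hne)]
  ring

private lemma key_bound (r : ℝ) (h0 : 0 ≤ r) (h1 : r < 1) (a b c d : ℕ)
    (hs : (a + 1) + (b + 1) = c + d) (hc : min (a + 1) (b + 1) ≤ c) (hcd : c ≤ d) :
    1 + (∑ i ∈ range a, r ^ (i + 1)) + (∑ i ∈ range b, r ^ (i + 1)) ≤
      (1 + r - r ^ c - r ^ d) / (1 - r) := by
  have h2 : (0:ℝ) < 1 - r := by linarith
  have hpow : r ^ c + r ^ d ≤ r ^ (a + 1) + r ^ (b + 1) := by
    rcases le_total (a + 1) (b + 1) with h | h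
    · exact pow_add_pow_le_aux r h0 h1.le (a+1) (b+1) c d
        (by simpa [min_eq_left h] using hc) hcd (by omega) hs
    · have := pow_add_pow_le_aux r h0 h1.le (b+1) (a+1) c d
        (by simpa [min_eq_right h] using hc) hcd (by omega) (by omega)
      linarith
  rw [geom_aux r h1, geom_aux r h1, le_div_iff₀ h2]
  have e1 : (r - r ^ (a + 1)) / (1 - r) * (1 - r) = r - r ^ (a + 1) :=
    div_mul_cancel₀ _ (ne_of_gt h2)
  have e2 : (r - r ^ (b + 1)) / (1 - r) * (1 - r) = r - r ^ (b + 1) :=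
    div_mul_cancel₀ _ (ne_of_gt h2)
  nlinarith

/-- Upper bound on the largest eigenvalue of the n×n exponential correlation
matrix, depending on the parity of n (Proposition 1, upper bound). -/
theorem exp_corr_max_eigenvalue_upper_bound (n : ℕ) (hn : 1 ≤ n)
    (ρ : ℂ) (hρ : ‖ρ‖ < 1)
    (T : Matrix (Fin n) (Fin n) ℂ)
    (hT : T = Matrix.of fun m k : Fin n =>
      if (m : ℕ) < (k : ℕ) then ρ ^ ((k : ℕ) - (m : ℕ))
      else if m = k then 1
      else (starRingEnd ℂ ρ) ^ ((m : ℕ) - (k : ℕ)))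
    (hHerm : T.IsHermitian) :
    (⨆ k, hHerm.eigenvalues k) ≤
      if Odd n then
        (1 + ‖ρ‖) / (1 - ‖ρ‖) -
          2 * (‖ρ‖) ^ ((n + 1) / 2) / (1 - ‖ρ‖)
      else (1 + ‖ρ‖) * (1 - (‖ρ‖) ^ (n / 2)) /
        (1 - ‖ρ‖) := by
  haveI : NeZero n := ⟨by omega⟩
  set r : ℝ := ‖ρ‖ with hr
  have h0 : 0 ≤ r := norm_nonneg ρ
  apply ciSup_le
  intro k
  set μ : ℝ := hHerm.eigenvalues k with hμdef
  -- μ is an eigenvalue of toLin' T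
  have hev : Module.End.HasEigenvalue (Matrix.toLin' T) ((μ : ℂ)) := by
    apply Module.End.hasEigenvalue_of_hasEigenvector (x := ⇑(hHerm.eigenvectorBasis k))
    constructor
    · rw [Module.End.mem_eigenspace_iff, Matrix.toLin'_apply,
        hHerm.mulVec_eigenvectorBasis]
      ext i
      simp [Complex.real_smul]
      exact Or.inl hμdef.symm
    · intro h
      exact hHerm.eigenvectorBasis.orthonormal.ne_zero k (by ext i; exact congrFun h i)
  obtain ⟨m, hm⟩ := eigenvalue_mem_ball hev
  -- the Gershgorin radius
  set R : ℝ := ∑ j ∈ Finset.univ.erase m, ‖T m j‖ with hR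
  have hdiag : T m m = 1 := by rw [hT]; simp
  have hμle : μ ≤ 1 + R := by
    rw [Metric.mem_closedBall, hdiag, dist_eq_norm] at hm
    have : |μ - 1| ≤ R := by
      calc |μ - 1| = ‖(μ - 1 : ℝ)‖ := (Real.norm_eq_abs _).symm
        _ = ‖((μ - 1 : ℝ) : ℂ)‖ := (Complex.norm_real _).symm
        _ = ‖(μ : ℂ) - 1‖ := by push_cast; ring_nf
        _ ≤ R := hm
    have := abs_le.mp this
    linarith [this.2]
  -- compute the norms of the entries
  have hnorm : ∀ j : Fin n, ‖T m j‖ = r ^ (Nat.dist (j : ℕ) (m : ℕ)) := by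
    intro j
    rw [hT]
    rcases lt_trichotomy ((m : ℕ)) ((j : ℕ)) with h | h | h
    · simp only [Matrix.of_apply, if_pos h]
      rw [show Nat.dist ((j:Fin n) : ℕ) ((m : Fin n) : ℕ) = (j : ℕ) - (m : ℕ) by
        simp only [Nat.dist]; omega, norm_pow]
    · have : m = j := Fin.ext h
      simp [this, Nat.dist_self]
    · have hne : ¬ m = j := by intro he; rw [he] at h; exact lt_irrefl _ h
      simp only [Matrix.of_apply, if_neg (by omega : ¬ (m : ℕ) < (j : ℕ)), if_neg hne]
      rw [show Nat.dist ((j:Fin n) : ℕ) ((m : Fin n) : ℕ) = (m : ℕ) - (j : ℕ) by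
        simp only [Nat.dist]; omega, norm_pow, Complex.norm_conj]
  -- rewrite the radius as two geometric sums
  have hmn : (m : ℕ) < n := m.isLt
  have hRsum : R = (∑ i ∈ Finset.range (m : ℕ), r ^ (i + 1)) +
      (∑ i ∈ Finset.range (n - 1 - (m : ℕ)), r ^ (i + 1)) := by
    have h1 : R + ‖T m m‖ = ∑ j : Fin n, ‖T m j‖ :=
      Finset.sum_erase_add _ _ (Finset.mem_univ m)
    have h2 : ∑ j : Fin n, ‖T m j‖ = ∑ j ∈ Finset.range n, r ^ (Nat.dist j (m : ℕ)) := by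
      rw [← Fin.sum_univ_eq_sum_range]
      exact Finset.sum_congr rfl fun j _ => hnorm j
    have h3 : ∑ j ∈ Finset.range n, r ^ (Nat.dist j (m : ℕ)) =
        (∑ j ∈ Finset.range (m : ℕ), r ^ ((m : ℕ) - j)) +
          ∑ j ∈ Finset.Ico (m : ℕ) n, r ^ (j - (m : ℕ)) := by
      rw [Finset.range_eq_Ico, ← Finset.sum_Ico_consecutive _ (Nat.zero_le (m : ℕ)) hmn.le,
        ← Finset.range_eq_Ico]
      congr 1
      · refine Finset.sum_congr rfl fun j hj => ?_
        have hj' := Finset.mem_range.mp hj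
        congr 1
        simp only [Nat.dist]; omega
      · refine Finset.sum_congr rfl fun j hj => ?_
        have hj' := (Finset.mem_Ico.mp hj).1
        congr 1
        simp only [Nat.dist]; omega
    have h4 : ∑ j ∈ Finset.range (m : ℕ), r ^ ((m : ℕ) - j) =
        ∑ i ∈ Finset.range (m : ℕ), r ^ (i + 1) := by
      rw [← Finset.sum_range_reflect (fun i => r ^ (i + 1)) (m : ℕ)]
      refine Finset.sum_congr rfl fun j hj => ?_
      have hj' := Finset.mem_range.mp hj
      congr 1
      omega
    have h5 : ∑ j ∈ Finset.Ico (m : ℕ) n, r ^ (j - (m : ℕ)) =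
        1 + ∑ i ∈ Finset.range (n - 1 - (m : ℕ)), r ^ (i + 1) := by
      rw [Finset.sum_Ico_eq_sum_range]
      have hnm : n - (m : ℕ) = (n - 1 - (m : ℕ)) + 1 := by omega
      rw [hnm, Finset.sum_range_succ']
      simp only [Nat.add_sub_cancel_left, pow_zero]
      rw [add_comm]
    have hTmm : ‖T m m‖ = 1 := by rw [hdiag]; norm_num
    rw [h2, h3, h4, h5] at h1
    rw [hTmm] at h1
    linarith
  -- final bound
  have hbound : 1 + R ≤ (if Odd n then
      (1 + r) / (1 - r) - 2 * r ^ ((n + 1) / 2) / (1 - r)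
    else (1 + r) * (1 - r ^ (n / 2)) / (1 - r)) := by
    rw [hRsum]
    by_cases hodd : Odd n
    · rw [if_pos hodd]
      obtain ⟨t, ht⟩ := hodd
      have hc : (n + 1) / 2 = t + 1 := by omega
      have key := key_bound r h0 hρ (m : ℕ) (n - 1 - (m : ℕ)) ((n+1)/2) ((n+1)/2)
        (by omega) (by omega) le_rfl
      refine le_trans (by linarith [key]) ?_
      rw [div_sub_div_same]
      apply le_of_eq
      congr 1
      ring
    · rw [if_neg hodd]
      have heven : Even n := Nat.not_odd_iff_even.mp hodd
      obtain ⟨t, ht⟩ := heven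
      have key := key_bound r h0 hρ (m : ℕ) (n - 1 - (m : ℕ)) (n/2) (n/2 + 1)
        (by omega) (by omega) (by omega)
      refine le_trans (by linarith [key]) ?_
      apply le_of_eq
      have h2 : (1:ℝ) - r ≠ 0 := by exact sub_ne_zero.mpr (ne_of_lt hρ).symm
      rw [show n / 2 = t from by omega, div_eq_div_iff h2 h2]
      ring
  calc μ ≤ 1 + R := hμle
    _ ≤ _ := hbound
end
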